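/- A continuous piecewise monotone (multimodal) map f : [0,1] → [0,1] has no closed invariant scrambled set with more than one point. -/

import Mathlib

open Set Filter

/-- Trap lemma, right side: near a fixed point `p` of an increasing map, a point of a
Li–Yorke-type pair with `p` must be pushed strictly to the right. -/
lemma myTrapRight {F : ℝ → ℝ} {p b s : ℝ} (hcont : ContinuousOn F (Set.Icc p b))
    (hmono : StrictMonoOn F (Set.Icc p b)) (hFp : F p = p)
    (hs1 : p < s) (hs2 : s ≤ b)
    (hv : ∀ ρ > (0:ℝ), ∃ᶠ n in Filter.atTop, |F^[n] s - p| < ρ)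
    (hfar : ∃ ε > (0:ℝ), ∃ᶠ n in Filter.atTop, ε ≤ |F^[n] s - p|) :
    s < F s := by
  have hpb : p ≤ b := hs1.le.trans hs2
  have hpI : p ∈ Set.Icc p b := ⟨le_rfl, hpb⟩
  rcases lt_trichotomy (F s) s with hlt | heq | hgt
  · exfalso
    have hstep : ∀ n, F^[n] s ∈ Set.Ioc p s ∧ F^[n+1] s < F^[n] s := by
      intro n
      induction n with
      | zero =>
        constructor
        · simpa using And.intro hs1 (le_refl s)
        · simpa using hlt
      | succ n ih =>
        obtain ⟨⟨hgt', hle'⟩, hdec⟩ := ih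
        have hmem : F^[n] s ∈ Set.Icc p b := ⟨hgt'.le, hle'.trans hs2⟩
        have hp1 : p < F^[n+1] s := by
          rw [Function.iterate_succ_apply']
          have := hmono hpI hmem hgt'
          rwa [hFp] at this
        have hle1 : F^[n+1] s ≤ s := hdec.le.trans hle'
        have hmem1 : F^[n+1] s ∈ Set.Icc p b := ⟨hp1.le, hle1.trans hs2⟩
        refine ⟨⟨hp1, hle1⟩, ?_⟩
        have h := hmono hmem1 hmem hdec
        rwa [← Function.iterate_succ_apply' F (n+1), ← Function.iterate_succ_apply' F n] at h
    set t : ℕ → ℝ := fun n => F^[n] s with ht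
    have hanti : StrictAnti t := strictAnti_nat_of_succ_lt fun n => (hstep n).2
    have hbdd : BddBelow (Set.range t) := ⟨p, by rintro _ ⟨n, rfl⟩; exact (hstep n).1.1.le⟩
    have htend : Filter.Tendsto t Filter.atTop (nhds (⨅ n, t n)) :=
      tendsto_atTop_ciInf hanti.antitone hbdd
    set q := ⨅ n, t n with hqdef
    have hq_le : ∀ n, q ≤ t n := fun n => ciInf_le hbdd n
    have hpq : p ≤ q := le_ciInf fun n => (hstep n).1.1.le
    have hqs : q ≤ s := (hq_le 0).trans (by simp [t])
    have hqI : q ∈ Set.Icc p b := ⟨hpq, hqs.trans hs2⟩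
    have htendw : Filter.Tendsto t Filter.atTop (nhdsWithin q (Set.Icc p b)) :=
      tendsto_nhdsWithin_of_tendsto_nhds_of_eventually_within _ htend
        (Filter.Eventually.of_forall fun n => ⟨(hstep n).1.1.le, (hstep n).1.2.trans hs2⟩)
    have hFt : Filter.Tendsto (fun n => F (t n)) Filter.atTop (nhds (F q)) :=
      (hcont q hqI).tendsto.comp htendw
    have hFt' : Filter.Tendsto (fun n => F (t n)) Filter.atTop (nhds q) := by
      have h1 : (fun n => F (t n)) = fun n => t (n+1) := by
        funext n; simp only [t, Function.iterate_succ_apply']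
      rw [h1]
      exact htend.comp (Filter.tendsto_add_atTop_nat 1)
    have hFq : F q = q := tendsto_nhds_unique hFt hFt'
    rcases eq_or_lt_of_le hpq with hqp | hqp
    · obtain ⟨ε, hε, hfr⟩ := hfar
      have h0 : Filter.Tendsto (fun n => |t n - p|) Filter.atTop (nhds 0) := by
        have h1 := (htend.sub_const p).abs
        rw [← hqp] at h1
        simpa using h1
      have hev : ∀ᶠ n in Filter.atTop, |t n - p| < ε := h0.eventually_lt_const hε
      obtain ⟨n, hn1, hn2⟩ := (hfr.and_eventually hev).exists
      exact absurd hn2 (not_lt.mpr hn1)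
    · obtain ⟨n, hn⟩ := (hv (q - p) (sub_pos.mpr hqp)).exists
      have h1 : q - p ≤ |t n - p| := by
        have h2 := hq_le n
        have : q - p ≤ t n - p := by linarith
        exact this.trans (le_abs_self _)
      exact absurd hn (not_lt.mpr h1)
  · exfalso
    have hfix : ∀ n, F^[n] s = s := fun n => Function.iterate_fixed heq n
    obtain ⟨n, hn⟩ := (hv (s - p) (sub_pos.mpr hs1)).exists
    rw [hfix n, abs_of_pos (sub_pos.mpr hs1)] at hn
    exact lt_irrefl _ hn
  · exact hgt

/-- Trap lemma, left side. -/
lemma myTrapLeft {F : ℝ → ℝ} {p b s : ℝ} (hcont : ContinuousOn F (Set.Icc b p))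
    (hmono : StrictMonoOn F (Set.Icc b p)) (hFp : F p = p)
    (hs1 : b ≤ s) (hs2 : s < p)
    (hv : ∀ ρ > (0:ℝ), ∃ᶠ n in Filter.atTop, |F^[n] s - p| < ρ)
    (hfar : ∃ ε > (0:ℝ), ∃ᶠ n in Filter.atTop, ε ≤ |F^[n] s - p|) :
    F s < s := by
  have hpb : b ≤ p := hs1.trans hs2.le
  have hpI : p ∈ Set.Icc b p := ⟨hpb, le_rfl⟩
  rcases lt_trichotomy (F s) s with hlt | heq | hgt
  · exact hlt
  · exfalso
    have hfix : ∀ n, F^[n] s = s := fun n => Function.iterate_fixed heq n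
    obtain ⟨n, hn⟩ := (hv (p - s) (sub_pos.mpr hs2)).exists
    rw [hfix n, abs_of_neg (sub_neg.mpr hs2)] at hn
    simp only [neg_sub] at hn
    exact lt_irrefl _ hn
  · exfalso
    have hstep : ∀ n, F^[n] s ∈ Set.Ico s p ∧ F^[n] s < F^[n+1] s := by
      intro n
      induction n with
      | zero =>
        constructor
        · simpa using And.intro (le_refl s) hs2
        · simpa using hgt
      | succ n ih =>
        obtain ⟨⟨hge', hlt'⟩, hinc⟩ := ih
        have hmem : F^[n] s ∈ Set.Icc b p := ⟨hs1.trans hge', hlt'.le⟩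
        have hp1 : F^[n+1] s < p := by
          rw [Function.iterate_succ_apply']
          have := hmono hmem hpI hlt'
          rwa [hFp] at this
        have hge1 : s ≤ F^[n+1] s := hge'.trans hinc.le
        have hmem1 : F^[n+1] s ∈ Set.Icc b p := ⟨hs1.trans hge1, hp1.le⟩
        refine ⟨⟨hge1, hp1⟩, ?_⟩
        have h := hmono hmem hmem1 hinc
        rwa [← Function.iterate_succ_apply' F (n+1), ← Function.iterate_succ_apply' F n] at h
    set t : ℕ → ℝ := fun n => F^[n] s with ht
    have hmonot : StrictMono t := strictMono_nat_of_lt_succ fun n => (hstep n).2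
    have hbdd : BddAbove (Set.range t) := ⟨p, by rintro _ ⟨n, rfl⟩; exact (hstep n).1.2.le⟩
    have htend : Filter.Tendsto t Filter.atTop (nhds (⨆ n, t n)) :=
      tendsto_atTop_ciSup hmonot.monotone hbdd
    set q := ⨆ n, t n with hqdef
    have hq_le : ∀ n, t n ≤ q := fun n => le_ciSup hbdd n
    have hpq : q ≤ p := ciSup_le fun n => (hstep n).1.2.le
    have hqs : s ≤ q := (hq_le 0).trans' (by simp [t])
    have hqI : q ∈ Set.Icc b p := ⟨hs1.trans hqs, hpq⟩
    have htendw : Filter.Tendsto t Filter.atTop (nhdsWithin q (Set.Icc b p)) :=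
      tendsto_nhdsWithin_of_tendsto_nhds_of_eventually_within _ htend
        (Filter.Eventually.of_forall fun n => ⟨hs1.trans (hstep n).1.1, (hstep n).1.2.le⟩)
    have hFt : Filter.Tendsto (fun n => F (t n)) Filter.atTop (nhds (F q)) :=
      (hcont q hqI).tendsto.comp htendw
    have hFt' : Filter.Tendsto (fun n => F (t n)) Filter.atTop (nhds q) := by
      have h1 : (fun n => F (t n)) = fun n => t (n+1) := by
        funext n; simp only [t, Function.iterate_succ_apply']
      rw [h1]
      exact htend.comp (Filter.tendsto_add_atTop_nat 1)
    have hFq : F q = q := tendsto_nhds_unique hFt hFt'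
    rcases eq_or_lt_of_le hpq with hqp | hqp
    · obtain ⟨ε, hε, hfr⟩ := hfar
      have h0 : Filter.Tendsto (fun n => |t n - p|) Filter.atTop (nhds 0) := by
        have h1 := (htend.sub_const p).abs
        rw [hqp] at h1
        simpa using h1
      have hev : ∀ᶠ n in Filter.atTop, |t n - p| < ε := h0.eventually_lt_const hε
      obtain ⟨n, hn1, hn2⟩ := (hfr.and_eventually hev).exists
      exact absurd hn2 (not_lt.mpr hn1)
    · obtain ⟨n, hn⟩ := (hv (p - q) (sub_pos.mpr hqp)).exists
      have h1 : p - q ≤ |t n - p| := by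
        have h2 := hq_le n
        have : p - q ≤ -(t n - p) := by linarith
        exact this.trans (neg_le_abs _)
      exact absurd hn (not_lt.mpr h1)

/-- The key contradiction lemma. -/
lemma myCore (F : ℝ → ℝ) (S : Set ℝ) (hSc : IsCompact S) (hFc : ContinuousOn F S)
    (hM : Set.MapsTo F S S) (p : ℝ) (hFp : F p = p) (δ ε₀ : ℝ) (hδ : 0 < δ) (hε : 0 < ε₀)
    (x : ℝ) (hxS : x ∈ S)
    (hv : ∀ ρ > (0:ℝ), ∃ᶠ n in Filter.atTop, |F^[n] x - p| < ρ)
    (hfar : ∃ᶠ n in Filter.atTop, ε₀ ≤ |F^[n] x - p|)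
    (Hr : ∀ s ∈ S, p < s → s ≤ p + δ → s < F s)
    (HL : (∀ s ∈ S, p - δ ≤ s → s < p → F s < s) ∨ (∀ s ∈ S, p - δ ≤ s → s < p → p < F s))
    (Hinj : ∀ a ∈ S, F a = p → a = p) : False := by
  classical
  have horb : ∀ n, F^[n] x ∈ S := fun n => hM.iterate n hxS
  set ρf : ℕ → ℝ := fun k => (min δ ε₀ / 2) * (1 / (k + 1)) with hρf
  have hmin : 0 < min δ ε₀ := lt_min hδ hε
  have hρpos : ∀ k, 0 < ρf k := fun k => by
    apply mul_pos (by linarith) (by positivity)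
  have hρδ : ∀ k, ρf k ≤ δ := by
    intro k
    have h1 : (1:ℝ) / (k + 1) ≤ 1 := by
      rw [div_le_one (by positivity)]; linarith [Nat.cast_nonneg (α := ℝ) k]
    have h2 : ρf k ≤ min δ ε₀ / 2 * 1 := by
      apply mul_le_mul_of_nonneg_left h1 (by linarith)
    have h3 : min δ ε₀ ≤ δ := min_le_left _ _
    simp only [mul_one] at h2
    linarith
  have hρε : ∀ k, ρf k < ε₀ := by
    intro k
    have h1 : (1:ℝ) / (k + 1) ≤ 1 := by
      rw [div_le_one (by positivity)]; linarith [Nat.cast_nonneg (α := ℝ) k]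
    have h2 : ρf k ≤ min δ ε₀ / 2 * 1 := by
      apply mul_le_mul_of_nonneg_left h1 (by linarith)
    have h3 : min δ ε₀ ≤ ε₀ := min_le_right _ _
    simp only [mul_one] at h2
    linarith
  have hρ0 : Filter.Tendsto ρf Filter.atTop (nhds 0) := by
    have h1 := tendsto_one_div_add_atTop_nhds_zero_nat.const_mul (min δ ε₀ / 2)
    rw [mul_zero] at h1
    exact h1
  have entry : ∀ k, ∃ n, 2 ≤ n ∧ |F^[n] x - p| < ρf k ∧ ρf k ≤ |F^[n-1] x - p| := by
    intro k
    obtain ⟨c, hc2, hcfar⟩ := Filter.frequently_atTop.mp hfar 2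
    obtain ⟨n0, hn0, hsm⟩ := Filter.frequently_atTop.mp (hv (ρf k) (hρpos k)) (c + 1)
    have hPex : ∃ j, c < j ∧ |F^[j] x - p| < ρf k := ⟨n0, by omega, hsm⟩
    set n := Nat.find hPex with hn
    obtain ⟨hn1, hn2⟩ := Nat.find_spec hPex
    refine ⟨n, by omega, hn2, ?_⟩
    rcases eq_or_lt_of_le (Nat.succ_le_of_lt hn1) with h | h
    · have : n - 1 = c := by omega
      rw [this]
      exact (hρε k).le.trans hcfar
    · have hmin' : ¬(c < n - 1 ∧ |F^[n-1] x - p| < ρf k) := Nat.find_min hPex (by omega)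
      have hcn : c < n - 1 := by omega
      push_neg at hmin'
      exact hmin' hcn
  choose nn hn2 hsmall hbig using entry
  set u : ℕ → ℝ := fun k => F^[nn k - 1] x with hu
  set w : ℕ → ℝ := fun k => F^[nn k - 2] x with hw
  have huS : ∀ k, u k ∈ S := fun k => horb _
  have hwS : ∀ k, w k ∈ S := fun k => horb _
  have hFu : ∀ k, F (u k) = F^[nn k] x := by
    intro k
    rw [hu]
    rw [← Function.iterate_succ_apply' F (nn k - 1) x]
    congr 1
    have := hn2 k
    omega
  have hFw : ∀ k, F (w k) = u k := by
    intro k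
    rw [hw, hu]
    rw [← Function.iterate_succ_apply' F (nn k - 2) x]
    congr 1
    have := hn2 k
    omega
  have hFusmall : ∀ k, |F (u k) - p| < ρf k := fun k => by rw [hFu k]; exact hsmall k
  have hubig : ∀ k, ρf k ≤ |u k - p| := fun k => hbig k
  have hunotp : ∀ k, u k ≠ p := by
    intro k h
    have h1 := hubig k
    rw [h] at h1
    simp at h1
    linarith [hρpos k]
  have hexR : ∀ k, ¬(p < u k ∧ u k ≤ p + δ) := by
    rintro k ⟨h1, h2⟩
    have h3 := Hr _ (huS k) h1 h2
    have h4 : ρf k ≤ u k - p := by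
      have := hubig k
      rwa [abs_of_pos (sub_pos.mpr h1)] at this
    have h5 : ρf k < F (u k) - p := by linarith
    have h6 := hFusmall k
    have := le_abs_self (F (u k) - p)
    linarith
  have hband : ∀ k, ¬(p < u k ∧ u k ≤ p + δ) → ¬(p - δ ≤ u k ∧ u k < p) → δ ≤ |u k - p| := by
    intro k h1 h2
    rcases lt_trichotomy (u k) p with h | h | h
    · have h3 : u k < p - δ := by
        by_contra hh
        push_neg at hh
        exact h2 ⟨hh, h⟩
      have h4 : δ ≤ -(u k - p) := by linarith
      exact h4.trans (neg_le_abs _)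
    · exact absurd h (hunotp k)
    · have h3 : p + δ < u k := by
        by_contra hh
        push_neg at hh
        exact h1 ⟨h, hh⟩
      have h4 : δ ≤ u k - p := by linarith
      exact h4.trans (le_abs_self _)
  have hFutend : Filter.Tendsto (fun k => F (u k)) Filter.atTop (nhds p) := by
    have h1 : Filter.Tendsto (fun k => F (u k) - p) Filter.atTop (nhds 0) := by
      apply squeeze_zero_norm (fun k => ?_) hρ0
      rw [Real.norm_eq_abs]
      exact (hFusmall k).le
    have h2 := h1.add_const p
    simpa using h2
  have keyLim : ∀ v : ℕ → ℝ, (∀ k, v k ∈ S) →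
      Filter.Tendsto (fun k => F (v k)) Filter.atTop (nhds p) →
      (∀ k, δ ≤ |v k - p|) → False := by
    intro v hvS hvF hvfar
    obtain ⟨q, hqS, φ, hφ, hqt⟩ := hSc.tendsto_subseq hvS
    have hwithin : Filter.Tendsto (v ∘ φ) Filter.atTop (nhdsWithin q S) :=
      tendsto_nhdsWithin_of_tendsto_nhds_of_eventually_within _ hqt
        (Filter.Eventually.of_forall fun k => hvS _)
    have h1 : Filter.Tendsto (fun k => F (v (φ k))) Filter.atTop (nhds (F q)) :=
      (hFc q hqS).tendsto.comp hwithin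
    have h2 : Filter.Tendsto (fun k => F (v (φ k))) Filter.atTop (nhds p) :=
      hvF.comp hφ.tendsto_atTop
    have hFq : F q = p := tendsto_nhds_unique h1 h2
    have hqp : q = p := Hinj q hqS hFq
    have h3 : Filter.Tendsto (fun k => |v (φ k) - p|) Filter.atTop (nhds |q - p|) :=
      (hqt.sub_const p).abs
    have h4 : δ ≤ |q - p| := ge_of_tendsto h3 (Filter.Eventually.of_forall fun k => hvfar _)
    rw [hqp] at h4
    simp at h4
    linarith
  rcases HL with Hl | Hl'
  · apply keyLim u huS hFutend
    intro k
    apply hband k (hexR k)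
    rintro ⟨h1, h2⟩
    have h3 := Hl _ (huS k) h1 h2
    have h4 : ρf k ≤ p - u k := by
      have := hubig k
      rwa [abs_sub_comm, abs_of_pos (sub_pos.mpr h2)] at this
    have h5 : ρf k < p - F (u k) := by linarith
    have h6 := hFusmall k
    have := neg_le_abs (F (u k) - p)
    linarith
  · by_cases hfreq : ∃ᶠ k in Filter.atTop, ¬(p - δ ≤ u k ∧ u k < p)
    · obtain ⟨φ, hφ, hP⟩ := Filter.extraction_of_frequently_atTop hfreq
      apply keyLim (u ∘ φ) (fun k => huS _) (hFutend.comp hφ.tendsto_atTop)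
      intro k
      exact hband (φ k) (hexR (φ k)) (hP k)
    · rw [Filter.not_frequently] at hfreq
      have hev : ∀ᶠ k in Filter.atTop, p - δ ≤ u k ∧ u k < p := by
        filter_upwards [hfreq] with k hk
        by_contra h
        exact hk h
      obtain ⟨q, hqS, φ, hφ, hqt⟩ := hSc.tendsto_subseq huS
      have hwithin : Filter.Tendsto (u ∘ φ) Filter.atTop (nhdsWithin q S) :=
        tendsto_nhdsWithin_of_tendsto_nhds_of_eventually_within _ hqt
          (Filter.Eventually.of_forall fun k => huS _)
      have h1 : Filter.Tendsto (fun k => F (u (φ k))) Filter.atTop (nhds (F q)) :=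
        (hFc q hqS).tendsto.comp hwithin
      have h2 : Filter.Tendsto (fun k => F (u (φ k))) Filter.atTop (nhds p) :=
        hFutend.comp hφ.tendsto_atTop
      have hFq : F q = p := tendsto_nhds_unique h1 h2
      have hqp : q = p := Hinj q hqS hFq
      have hup : Filter.Tendsto (fun k => u (φ k)) Filter.atTop (nhds p) := by
        rw [← hqp]; exact hqt
      have hwfar : ∀ᶠ k in Filter.atTop, δ ≤ |w (φ k) - p| := by
        filter_upwards [hφ.tendsto_atTop.eventually hev] with k hk
        obtain ⟨hk1, hk2⟩ := hk
        have h1 : ¬(p < w (φ k) ∧ w (φ k) ≤ p + δ) := by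
          rintro ⟨ha, hb⟩
          have h3 := Hr _ (hwS _) ha hb
          rw [hFw] at h3
          linarith
        have h2 : ¬(p - δ ≤ w (φ k) ∧ w (φ k) < p) := by
          rintro ⟨ha, hb⟩
          have h3 := Hl' _ (hwS _) ha hb
          rw [hFw] at h3
          linarith
        have h3 : w (φ k) ≠ p := by
          intro h
          have h4 : F (w (φ k)) = p := by rw [h, hFp]
          rw [hFw] at h4
          rw [h4] at hk2
          exact lt_irrefl _ hk2
        rcases lt_trichotomy (w (φ k)) p with h | h | h
        · have h5 : w (φ k) < p - δ := by
            by_contra hh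
            push_neg at hh
            exact h2 ⟨hh, h⟩
          have h6 : δ ≤ -(w (φ k) - p) := by linarith
          exact h6.trans (neg_le_abs _)
        · exact absurd h h3
        · have h5 : p + δ < w (φ k) := by
            by_contra hh
            push_neg at hh
            exact h1 ⟨h, hh⟩
          have h6 : δ ≤ w (φ k) - p := by linarith
          exact h6.trans (le_abs_self _)
      obtain ⟨q', hq'S, ψ, hψ, hq't⟩ := hSc.tendsto_subseq (fun k => hwS (φ k))
      have hwithin' : Filter.Tendsto ((fun k => w (φ k)) ∘ ψ) Filter.atTop (nhdsWithin q' S) :=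
        tendsto_nhdsWithin_of_tendsto_nhds_of_eventually_within _ hq't
          (Filter.Eventually.of_forall fun k => hwS _)
      have h1' : Filter.Tendsto (fun k => F (w (φ (ψ k)))) Filter.atTop (nhds (F q')) :=
        (hFc q' hq'S).tendsto.comp hwithin'
      have h2' : Filter.Tendsto (fun k => F (w (φ (ψ k)))) Filter.atTop (nhds p) := by
        have h3 : (fun k => F (w (φ (ψ k)))) = fun k => u (φ (ψ k)) := by
          funext k; exact hFw _
        rw [h3]
        exact hup.comp hψ.tendsto_atTop
      have hFq' : F q' = p := tendsto_nhds_unique h1' h2'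
      have hq'p : q' = p := Hinj q' hq'S hFq'
      have h3 : Filter.Tendsto (fun k => |w (φ (ψ k)) - p|) Filter.atTop (nhds |q' - p|) :=
        (hq't.sub_const p).abs
      have h4 : δ ≤ |q' - p| :=
        ge_of_tendsto h3 (hψ.tendsto_atTop.eventually hwfar)
      rw [hq'p] at h4
      simp at h4
      linarith

/-- Transfer of visit/far data from `f` to `f^[2]`. -/
lemma myParity {f : ℝ → ℝ} {p s : ℝ} (hfix : f p = p)
    (hcp : ∀ ε > (0:ℝ), ∃ η > (0:ℝ), ∀ t ∈ Set.Icc (0:ℝ) 1, |t - p| < η → |f t - p| < ε)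
    (horb : ∀ n, f^[n] s ∈ Set.Icc (0:ℝ) 1)
    (hv : ∀ ρ > (0:ℝ), ∃ᶠ n in Filter.atTop, |f^[n] s - p| < ρ)
    (hfar : ∃ ε > (0:ℝ), ∃ᶠ n in Filter.atTop, ε ≤ |f^[n] s - p|) :
    (∀ ρ > (0:ℝ), ∃ᶠ n in Filter.atTop, |(f^[2])^[n] s - p| < ρ) ∧
      (∃ ε > (0:ℝ), ∃ᶠ n in Filter.atTop, ε ≤ |(f^[2])^[n] s - p|) := by
  have hit : ∀ k, (f^[2])^[k] s = f^[2*k] s := by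
    intro k
    rw [Function.iterate_mul]
  constructor
  · intro ρ hρ
    obtain ⟨η, hη, hb⟩ := hcp ρ hρ
    rw [Filter.frequently_atTop]
    intro N
    obtain ⟨n, hn, hsm⟩ := Filter.frequently_atTop.mp (hv (min ρ η) (lt_min hρ hη)) (2*N + 1)
    rcases Nat.even_or_odd n with ⟨j, hj⟩ | ⟨j, hj⟩
    · refine ⟨j, by omega, ?_⟩
      rw [hit j]
      have : 2 * j = n := by omega
      rw [this]
      exact hsm.trans_le (min_le_left _ _)
    · refine ⟨j + 1, by omega, ?_⟩
      rw [hit (j+1)]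
      have h2 : 2 * (j + 1) = n + 1 := by omega
      rw [h2, Function.iterate_succ_apply']
      exact hb _ (horb n) (hsm.trans_le (min_le_right _ _))
  · obtain ⟨ε, hε, hfr⟩ := hfar
    obtain ⟨η, hη, hb⟩ := hcp ε hε
    refine ⟨min ε η, lt_min hε hη, ?_⟩
    rw [Filter.frequently_atTop]
    intro N
    obtain ⟨n, hn, hge⟩ := Filter.frequently_atTop.mp hfr (2*N + 1)
    rcases Nat.even_or_odd n with ⟨j, hj⟩ | ⟨j, hj⟩
    · refine ⟨j, by omega, ?_⟩
      rw [hit j]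
      have : 2 * j = n := by omega
      rw [this]
      exact (min_le_left _ _).trans hge
    · refine ⟨j, by omega, ?_⟩
      rw [hit j]
      by_contra h
      push_neg at h
      have h2 : |f^[2*j] s - p| < η := h.trans_le (min_le_right _ _)
      have h3 := hb _ (horb (2*j)) h2
      rw [← Function.iterate_succ_apply' f (2*j) s] at h3
      have h4 : 2 * j + 1 = n := by omega
      rw [Nat.succ_eq_add_one, h4] at h3
      linarith
  
/-- Conjugation by the reflection `z ↦ 2p - z`. -/
lemma myConjIter (F : ℝ → ℝ) (p : ℝ) :
    ∀ (n : ℕ) (y : ℝ), (fun z => 2*p - F (2*p - z))^[n] (2*p - y) = 2*p - F^[n] y := by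
  intro n
  induction n with
  | zero => intro y; simp
  | succ n ih =>
    intro y
    rw [Function.iterate_succ_apply, Function.iterate_succ_apply]
    have h2 : 2*p - (2*p - y) = y := by ring
    rw [h2]
    exact ih (F y)

/-- Existence of a monotonicity interval to the right of `p`. -/
lemma myRightLap {f : ℝ → ℝ} {m : ℕ} {a : Fin (m + 1) → ℝ} (ha : StrictMono a)
    (h0 : a 0 = 0) (h1 : a (Fin.last m) = 1)
    (hlap : ∀ i : Fin m, StrictMonoOn f (Set.Icc (a i.castSucc) (a i.succ)) ∨
      StrictAntiOn f (Set.Icc (a i.castSucc) (a i.succ)))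
    {p : ℝ} (hp0 : 0 ≤ p) (hp1 : p < 1) :
    ∃ b, p < b ∧ b ≤ 1 ∧ (StrictMonoOn f (Set.Icc p b) ∨ StrictAntiOn f (Set.Icc p b)) := by
  classical
  have hne : (Finset.univ.filter (fun j : Fin (m+1) => a j ≤ p)).Nonempty :=
    ⟨0, by simp [h0, hp0]⟩
  set j := (Finset.univ.filter (fun j : Fin (m+1) => a j ≤ p)).max' hne with hj'
  have hj : a j ≤ p := by
    have h := Finset.max'_mem _ hne
    rw [Finset.mem_filter] at h
    exact h.2
  have hjlast : j ≠ Fin.last m := by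
    intro h
    rw [h, h1] at hj
    exact absurd hj (not_le.mpr hp1)
  set i : Fin m := j.castPred hjlast with hi
  have hcast : i.castSucc = j := Fin.castSucc_castPred j hjlast
  have hsucc_gt : p < a i.succ := by
    by_contra h
    push_neg at h
    have hmem : i.succ ∈ Finset.univ.filter (fun j : Fin (m+1) => a j ≤ p) := by
      rw [Finset.mem_filter]
      exact ⟨Finset.mem_univ _, h⟩
    have hle : i.succ ≤ j := Finset.le_max' _ _ hmem
    have hlt : j < i.succ := by
      rw [← hcast]
      exact Fin.castSucc_lt_succ
    exact absurd hle (not_le.mpr hlt)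
  refine ⟨a i.succ, hsucc_gt, ?_, ?_⟩
  · rw [← h1]
    exact ha.monotone (Fin.le_last _)
  · have hsub : Set.Icc p (a i.succ) ⊆ Set.Icc (a i.castSucc) (a i.succ) :=
      Set.Icc_subset_Icc (by rw [hcast]; exact hj) le_rfl
    rcases hlap i with h | h
    · exact Or.inl (h.mono hsub)
    · exact Or.inr (h.mono hsub)

/-- Existence of a monotonicity interval to the left of `p`. -/
lemma myLeftLap {f : ℝ → ℝ} {m : ℕ} {a : Fin (m + 1) → ℝ} (ha : StrictMono a)
    (h0 : a 0 = 0) (h1 : a (Fin.last m) = 1)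
    (hlap : ∀ i : Fin m, StrictMonoOn f (Set.Icc (a i.castSucc) (a i.succ)) ∨
      StrictAntiOn f (Set.Icc (a i.castSucc) (a i.succ)))
    {p : ℝ} (hp0 : 0 < p) (hp1 : p ≤ 1) :
    ∃ b, b < p ∧ 0 ≤ b ∧ (StrictMonoOn f (Set.Icc b p) ∨ StrictAntiOn f (Set.Icc b p)) := by
  classical
  have hne : (Finset.univ.filter (fun j : Fin (m+1) => p ≤ a j)).Nonempty :=
    ⟨Fin.last m, by simp [h1, hp1]⟩
  set j := (Finset.univ.filter (fun j : Fin (m+1) => p ≤ a j)).min' hne with hj'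
  have hj : p ≤ a j := by
    have h := Finset.min'_mem _ hne
    rw [Finset.mem_filter] at h
    exact h.2
  have hj0 : j ≠ 0 := by
    intro h
    rw [h, h0] at hj
    linarith
  set i : Fin m := j.pred hj0 with hi
  have hisucc : i.succ = j := Fin.succ_pred j hj0
  have hcast : a i.castSucc < p := by
    by_contra h
    push_neg at h
    have hmem : i.castSucc ∈ Finset.univ.filter (fun j : Fin (m+1) => p ≤ a j) := by
      rw [Finset.mem_filter]
      exact ⟨Finset.mem_univ _, h⟩
    have hle : j ≤ i.castSucc := Finset.min'_le _ _ hmem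
    have hlt : i.castSucc < j := by
      rw [← hisucc]
      exact Fin.castSucc_lt_succ
    exact absurd hle (not_le.mpr hlt)
  refine ⟨a i.castSucc, hcast, ?_, ?_⟩
  · rw [← h0]
    exact ha.monotone (Fin.zero_le _)
  · have hsub : Set.Icc (a i.castSucc) p ⊆ Set.Icc (a i.castSucc) (a i.succ) :=
      Set.Icc_subset_Icc le_rfl (by rw [hisucc]; exact hj)
    rcases hlap i with h | h
    · exact Or.inl (h.mono hsub)
    · exact Or.inr (h.mono hsub)

/-- A continuous multimodal (piecewise strictly monotone) map of `[0,1]` has no closed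
invariant scrambled set with more than one point. -/
theorem multimodal_no_closed_invariant_scrambled_set
    (f : ℝ → ℝ) (hf : ContinuousOn f (Set.Icc 0 1))
    (hmaps : Set.MapsTo f (Set.Icc 0 1) (Set.Icc 0 1))
    (hmm : ∃ (m : ℕ) (a : Fin (m + 1) → ℝ), StrictMono a ∧ a 0 = 0 ∧ a (Fin.last m) = 1 ∧
      ∀ i : Fin m, StrictMonoOn f (Set.Icc (a i.castSucc) (a i.succ)) ∨
        StrictAntiOn f (Set.Icc (a i.castSucc) (a i.succ)))
    (S : Set ℝ) (hS : S ⊆ Set.Icc 0 1) (hSclosed : IsClosed S) (hSinv : f '' S ⊆ S)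
    (hscr : ∀ x ∈ S, ∀ y ∈ S, x ≠ y →
      Filter.atTop.liminf (fun n : ℕ => |f^[n] x - f^[n] y|) = 0 ∧
      0 < Filter.atTop.limsup (fun n : ℕ => |f^[n] x - f^[n] y|)) :
    S.Subsingleton := by
  classical
  by_contra hns
  rw [Set.not_subsingleton_iff] at hns
  obtain ⟨x₀, hx₀S, y₀, hy₀S, hxy⟩ := hns
  obtain ⟨m, a, haM, ha0, ha1, hlap⟩ := hmm
  have hM : Set.MapsTo f S S := fun z hz => hSinv ⟨z, hz, rfl⟩
  have hScomp : IsCompact S := isCompact_Icc.of_isClosed_subset hSclosed hS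
  have hfS : ContinuousOn f S := hf.mono hS
  have horb : ∀ z ∈ S, ∀ n : ℕ, f^[n] z ∈ S := fun z hz n => hM.iterate n hz
  have horbI : ∀ z ∈ S, ∀ n : ℕ, f^[n] z ∈ Set.Icc (0:ℝ) 1 := fun z hz n => hS (horb z hz n)
  -- Step 1: a fixed point `p ∈ S`.
  obtain ⟨p, hpS, hfixp⟩ : ∃ p ∈ S, f p = p := by
    by_cases hfx : f x₀ = x₀
    · exact ⟨x₀, hx₀S, hfx⟩
    · have hfx₀S : f x₀ ∈ S := hM hx₀S
      have hne : x₀ ≠ f x₀ := fun h => hfx h.symm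
      have hli := (hscr x₀ hx₀S (f x₀) hfx₀S hne).1
      have hsel : ∀ k : ℕ, ∃ n, k ≤ n ∧ |f^[n] x₀ - f^[n+1] x₀| < 1/(k+1) := by
        intro k
        have hfreq : ∃ᶠ n in Filter.atTop, |f^[n] x₀ - f^[n] (f x₀)| < 1/(k+1) := by
          apply Filter.frequently_lt_of_liminf_lt
          · refine Filter.isCoboundedUnder_ge_of_le _ (x := 2) (fun n => ?_)
            have h1 := horbI x₀ hx₀S n
            have h2 := horbI (f x₀) hfx₀S n
            rw [abs_sub_le_iff]
            constructor <;> linarith [h1.1, h1.2, h2.1, h2.2]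
          · rw [hli]; positivity
        obtain ⟨n, hn1, hn2⟩ := Filter.frequently_atTop.mp hfreq k
        refine ⟨n, hn1, ?_⟩
        rwa [← Function.iterate_succ_apply f n x₀] at hn2
      choose nn hnn1 hnn2 using hsel
      obtain ⟨z, hzS, φ, hφ, hzt⟩ := hScomp.tendsto_subseq (fun k => horb x₀ hx₀S (nn k))
      refine ⟨z, hzS, ?_⟩
      have h1 : Filter.Tendsto (fun k => f (f^[nn (φ k)] x₀)) Filter.atTop (nhds (f z)) :=
        (hfS z hzS).tendsto.comp (tendsto_nhdsWithin_of_tendsto_nhds_of_eventually_within _ hzt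
          (Filter.Eventually.of_forall fun k => horb x₀ hx₀S _))
      have h2 : Filter.Tendsto (fun k => f (f^[nn (φ k)] x₀) - f^[nn (φ k)] x₀)
          Filter.atTop (nhds 0) := by
        apply squeeze_zero_norm (fun k => ?_) tendsto_one_div_add_atTop_nhds_zero_nat
        rw [Real.norm_eq_abs, ← Function.iterate_succ_apply' f (nn (φ k)) x₀, abs_sub_comm]
        have ha1 := (hnn2 (φ k)).le
        have ha2 : 1/((φ k : ℝ)+1) ≤ 1/((k:ℝ)+1) := by
          apply one_div_le_one_div_of_le (by positivity)
          have h5 : k ≤ φ k := hφ.le_apply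
          exact_mod_cast Nat.succ_le_succ h5
        linarith
      have h3 : Filter.Tendsto (fun k => f (f^[nn (φ k)] x₀)) Filter.atTop (nhds z) := by
        have h4 := h2.add hzt
        rw [zero_add] at h4
        exact h4.congr fun k => sub_add_cancel _ _
      exact tendsto_nhds_unique h1 h3
  -- Step 2: pair data against `p`.
  have pairdata : ∀ s ∈ S, s ≠ p →
      (∀ ρ > (0:ℝ), ∃ᶠ n in Filter.atTop, |f^[n] s - p| < ρ) ∧
      (∃ ε > (0:ℝ), ∃ᶠ n in Filter.atTop, ε ≤ |f^[n] s - p|) := by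
    intro s hsS hsp
    obtain ⟨hli, hls⟩ := hscr s hsS p hpS hsp
    have hitp : ∀ n : ℕ, f^[n] p = p := fun n => Function.iterate_fixed hfixp n
    simp only [hitp] at hli hls
    constructor
    · intro ρ hρ
      apply Filter.frequently_lt_of_liminf_lt
      · refine Filter.isCoboundedUnder_ge_of_le _ (x := 2) (fun n => ?_)
        have h1 := horbI s hsS n
        have h2 := hS hpS
        rw [abs_sub_le_iff]
        constructor <;> linarith [h1.1, h1.2, h2.1, h2.2]
      · rw [hli]; exact hρ
    · refine ⟨Filter.limsup (fun n : ℕ => |f^[n] s - p|) Filter.atTop / 2, half_pos hls, ?_⟩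
      have h1 := Filter.frequently_lt_of_lt_limsup
        (u := fun n : ℕ => |f^[n] s - p|)
        (Filter.isCoboundedUnder_le_of_le _ (x := 0) (fun n => abs_nonneg _))
        (half_lt_self hls)
      exact h1.mono fun n hn => hn.le
  -- Step 3: injectivity-type facts at `p`.
  have hinj : ∀ b ∈ S, f b = p → b = p := by
    intro b hbS hfb
    by_contra hne
    have hls := (hscr b hbS p hpS hne).2
    have hitp : ∀ n : ℕ, f^[n] p = p := fun n => Function.iterate_fixed hfixp n
    have hev : ∀ᶠ n in Filter.atTop, |f^[n] b - f^[n] p| = 0 := by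
      rw [Filter.eventually_atTop]
      refine ⟨1, fun n hn => ?_⟩
      obtain ⟨k, rfl⟩ : ∃ k, n = k + 1 := ⟨n - 1, by omega⟩
      rw [Function.iterate_succ_apply, hfb, hitp, hitp]
      simp
    have h0 : Filter.atTop.limsup (fun n : ℕ => |f^[n] b - f^[n] p|) = 0 := by
      rw [Filter.limsup_congr hev]
      exact Filter.limsup_const 0
    rw [h0] at hls
    exact lt_irrefl _ hls
  have hinj2 : ∀ b ∈ S, f^[2] b = p → b = p := by
    intro b hbS hfb
    by_contra hne
    have hls := (hscr b hbS p hpS hne).2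
    have hitp : ∀ n : ℕ, f^[n] p = p := fun n => Function.iterate_fixed hfixp n
    have hev : ∀ᶠ n in Filter.atTop, |f^[n] b - f^[n] p| = 0 := by
      rw [Filter.eventually_atTop]
      refine ⟨2, fun n hn => ?_⟩
      obtain ⟨k, rfl⟩ : ∃ k, n = k + 2 := ⟨n - 2, by omega⟩
      rw [Function.iterate_add_apply f k 2, hfb, hitp, hitp]
      simp
    have h0 : Filter.atTop.limsup (fun n : ℕ => |f^[n] b - f^[n] p|) = 0 := by
      rw [Filter.limsup_congr hev]
      exact Filter.limsup_const 0
    rw [h0] at hls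
    exact lt_irrefl _ hls
  -- Step 4: a scrambled companion of `p`.
  obtain ⟨x, hxS, hxp⟩ : ∃ x ∈ S, x ≠ p := by
    by_cases h : x₀ = p
    · exact ⟨y₀, hy₀S, fun hy => hxy (by rw [h, hy])⟩
    · exact ⟨x₀, hx₀S, h⟩
  obtain ⟨hvx, hfarx⟩ := pairdata x hxS hxp
  obtain ⟨ε₀, hε₀, hfarx'⟩ := hfarx
  have hp01 : p ∈ Set.Icc (0:ℝ) 1 := hS hpS
  have hcp : ∀ ε > (0:ℝ), ∃ η > (0:ℝ), ∀ t ∈ Set.Icc (0:ℝ) 1, |t - p| < η → |f t - p| < ε := by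
    intro ε hε
    have h1 : ContinuousWithinAt f (Set.Icc 0 1) p := hf p hp01
    rw [Metric.continuousWithinAt_iff] at h1
    obtain ⟨η, hη, h2⟩ := h1 ε hε
    refine ⟨η, hη, fun t ht hlt => ?_⟩
    have h3 := h2 ht (by rwa [Real.dist_eq])
    rwa [Real.dist_eq, hfixp] at h3
  -- Step 5: local monotone structure at `p` and the case analysis.
  rcases eq_or_lt_of_le hp01.2 with hp1 | hp1
  · -- p = 1 : only a left lap
    obtain ⟨bL, hbLlt, hbLge, hlapL⟩ := myLeftLap haM ha0 ha1 hlap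
      (by rw [hp1]; norm_num) hp01.2
    rcases hlapL with hmonoL | hantiL
    · apply myCore f S hScomp hfS hM p hfixp (p - bL) ε₀ (by linarith) hε₀ x hxS hvx hfarx'
      · intro s hsS h1 h2
        exfalso
        have h3 := (hS hsS).2
        rw [hp1] at h1
        linarith
      · left
        intro s hsS h1 h2
        exact myTrapLeft (hf.mono (Set.Icc_subset_Icc hbLge hp01.2)) hmonoL hfixp
          (by linarith) h2 (pairdata s hsS h2.ne).1 (pairdata s hsS h2.ne).2
      · exact hinj
    · exfalso
      have h1 : f p < f bL := hantiL ⟨le_rfl, hbLlt.le⟩ ⟨hbLlt.le, le_rfl⟩ hbLlt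
      have h2 : f bL ∈ Set.Icc (0:ℝ) 1 := hmaps ⟨hbLge, hbLlt.le.trans hp01.2⟩
      rw [hfixp, hp1] at h1
      linarith [h2.2]
  · -- p < 1 : there is a right lap
    obtain ⟨bR, hbRgt, hbRle, hlapR⟩ := myRightLap haM ha0 ha1 hlap hp01.1 hp1
    have hsubR : Set.Icc p bR ⊆ Set.Icc (0:ℝ) 1 := Set.Icc_subset_Icc hp01.1 hbRle
    rcases eq_or_lt_of_le hp01.1 with hp0 | hp0
    · -- p = 0 : no left side
      rcases hlapR with hmonoR | hantiR
      · apply myCore f S hScomp hfS hM p hfixp (bR - p) ε₀ (by linarith) hε₀ x hxS hvx hfarx'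
        · intro s hsS h1 h2
          exact myTrapRight (hf.mono hsubR) hmonoR hfixp h1 (by linarith)
            (pairdata s hsS h1.ne').1 (pairdata s hsS h1.ne').2
        · left
          intro s hsS h1 h2
          exfalso
          have h3 := (hS hsS).1
          rw [← hp0] at h2
          linarith
        · exact hinj
      · exfalso
        have h1 : f bR < f p := hantiR ⟨le_rfl, hbRgt.le⟩ ⟨hbRgt.le, le_rfl⟩ hbRgt
        have h2 : f bR ∈ Set.Icc (0:ℝ) 1 := hmaps ⟨hp01.1.trans hbRgt.le, hbRle⟩
        rw [hfixp, ← hp0] at h1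
        linarith [h2.1]
    · -- 0 < p < 1 : both laps
      obtain ⟨bL, hbLlt, hbLge, hlapL⟩ := myLeftLap haM ha0 ha1 hlap hp0 hp01.2
      have hsubL : Set.Icc bL p ⊆ Set.Icc (0:ℝ) 1 := Set.Icc_subset_Icc hbLge hp01.2
      rcases hlapR with hmonoR | hantiR
      · -- right increasing
        apply myCore f S hScomp hfS hM p hfixp (min (bR - p) (p - bL)) ε₀
          (lt_min (by linarith) (by linarith)) hε₀ x hxS hvx hfarx'
        · intro s hsS h1 h2
          apply myTrapRight (hf.mono hsubR) hmonoR hfixp h1 ?_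
            (pairdata s hsS h1.ne').1 (pairdata s hsS h1.ne').2
          have h3 : min (bR - p) (p - bL) ≤ bR - p := min_le_left _ _
          linarith
        · rcases hlapL with hmonoL | hantiL
          · left
            intro s hsS h1 h2
            apply myTrapLeft (hf.mono hsubL) hmonoL hfixp ?_ h2
              (pairdata s hsS h2.ne).1 (pairdata s hsS h2.ne).2
            have h3 : min (bR - p) (p - bL) ≤ p - bL := min_le_right _ _
            linarith
          · right
            intro s hsS h1 h2
            have h3 : min (bR - p) (p - bL) ≤ p - bL := min_le_right _ _
            have hmem_s : s ∈ Set.Icc bL p := ⟨by linarith, h2.le⟩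
            have h4 : f p < f s := hantiL hmem_s ⟨hbLlt.le, le_rfl⟩ h2
            rwa [hfixp] at h4
        · exact hinj
      · rcases hlapL with hmonoL | hantiL
        · -- (dec, inc) : use the reflected map
          set G : ℝ → ℝ := fun z => 2*p - f (2*p - z) with hGdef
          set T : Set ℝ := (fun t => 2*p - t) '' S with hTdef
          have hconj : ∀ (n : ℕ) (y : ℝ), G^[n] (2*p - y) = 2*p - f^[n] y := myConjIter f p
          have hGapp : ∀ y : ℝ, G (2*p - y) = 2*p - f y := fun y => by
            simpa using hconj 1 y
          have hTc : IsCompact T := hScomp.image (continuous_const.sub continuous_id)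
          have hGT : Set.MapsTo G T T := by
            rintro z ⟨s, hsS, rfl⟩
            exact ⟨f s, hM hsS, (hGapp s).symm⟩
          have hGc : ContinuousOn G T := by
            have h1 : ContinuousOn (fun z => f (2*p - z)) T := by
              apply ContinuousOn.comp hfS ((continuous_const.sub continuous_id).continuousOn)
              rintro z ⟨s, hsS, rfl⟩
              show 2*p - (2*p - s) ∈ S
              rw [show 2*p - (2*p - s) = s from by ring]
              exact hsS
            exact continuousOn_const.sub h1
          have hpT : p ∈ T := ⟨p, hpS, by ring⟩
          have hGp : G p = p := by
            have h1 := hGapp p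
            rw [show (2*p - p : ℝ) = p from by ring, hfixp,
              show (2*p - p : ℝ) = p from by ring] at h1
            exact h1
          have hxT : (2*p - x) ∈ T := ⟨x, hxS, rfl⟩
          have hGv : ∀ ρ > (0:ℝ), ∃ᶠ n in Filter.atTop, |G^[n] (2*p - x) - p| < ρ := by
            intro ρ hρ
            refine (hvx ρ hρ).mono fun n hn => ?_
            rw [hconj n x, show 2*p - f^[n] x - p = -(f^[n] x - p) from by ring, abs_neg]
            exact hn
          have hGfar : ∃ᶠ n in Filter.atTop, ε₀ ≤ |G^[n] (2*p - x) - p| := by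
            refine hfarx'.mono fun n hn => ?_
            rw [hconj n x, show 2*p - f^[n] x - p = -(f^[n] x - p) from by ring, abs_neg]
            exact hn
          apply myCore G T hTc hGc hGT p hGp (min (bR - p) (p - bL)) ε₀
            (lt_min (by linarith) (by linarith)) hε₀ (2*p - x) hxT hGv hGfar
          · rintro z ⟨s, hsS, rfl⟩ h1 h2
            have hz1 : p < 2*p - s := h1
            have hz2 : 2*p - s ≤ p + min (bR - p) (p - bL) := h2
            have hs2 : s < p := by linarith
            have hmin2 : min (bR - p) (p - bL) ≤ p - bL := min_le_right _ _
            have h3 : f s < s := myTrapLeft (hf.mono hsubL) hmonoL hfixp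
              (by linarith) hs2 (pairdata s hsS hs2.ne).1 (pairdata s hsS hs2.ne).2
            show 2*p - s < G (2*p - s)
            rw [hGapp s]
            linarith
          · right
            rintro z ⟨s, hsS, rfl⟩ h1 h2
            have hz1 : p - min (bR - p) (p - bL) ≤ 2*p - s := h1
            have hz2 : 2*p - s < p := h2
            have hs1 : p < s := by linarith
            have hmin1 : min (bR - p) (p - bL) ≤ bR - p := min_le_left _ _
            have hmem_s : s ∈ Set.Icc p bR := ⟨hs1.le, by linarith⟩
            have h3 : f s < f p := hantiR ⟨le_rfl, hbRgt.le⟩ hmem_s hs1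
            rw [hfixp] at h3
            show p < G (2*p - s)
            rw [hGapp s]
            linarith
          · rintro z ⟨s, hsS, rfl⟩ hz
            have hz' : G (2*p - s) = p := hz
            rw [hGapp s] at hz'
            have h1 : f s = p := by linarith
            have h2 : s = p := hinj s hsS h1
            show 2*p - s = p
            rw [h2]; ring
        · -- (dec, dec) : use the second iterate
          obtain ⟨ηR, hηR, hcpR⟩ := hcp (p - bL) (by linarith)
          obtain ⟨ηL, hηL, hcpL⟩ := hcp (bR - p) (by linarith)
          set dR := min (bR - p) (ηR/2) with hdR
          set dL := min (p - bL) (ηL/2) with hdL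
          have hdRpos : 0 < dR := lt_min (by linarith) (by linarith)
          have hdLpos : 0 < dL := lt_min (by linarith) (by linarith)
          have hdRle : dR ≤ bR - p := min_le_left _ _
          have hdLle : dL ≤ p - bL := min_le_left _ _
          have hdRη : dR ≤ ηR/2 := min_le_right _ _
          have hdLη : dL ≤ ηL/2 := min_le_right _ _
          have hIccR2 : Set.Icc p (p + dR) ⊆ Set.Icc (0:ℝ) 1 :=
            Set.Icc_subset_Icc hp01.1 (by linarith)
          have hIccL2 : Set.Icc (p - dL) p ⊆ Set.Icc (0:ℝ) 1 :=
            Set.Icc_subset_Icc (by linarith) hp01.2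
          have hmapR2 : ∀ s ∈ Set.Icc p (p + dR), f s ∈ Set.Icc bL p := by
            intro s hs
            have hsI : s ∈ Set.Icc (0:ℝ) 1 := hIccR2 hs
            constructor
            · have h1 : |s - p| < ηR := by
                rw [abs_of_nonneg (by linarith [hs.1])]
                linarith [hs.2]
              have h3 := hcpR s hsI h1
              have h4 := abs_lt.mp h3
              linarith [h4.1]
            · rcases eq_or_lt_of_le hs.1 with h | h
              · rw [← h, hfixp]
              · have hmem_s : s ∈ Set.Icc p bR := ⟨hs.1, by linarith [hs.2]⟩
                have h5 := hantiR ⟨le_rfl, hbRgt.le⟩ hmem_s h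
                rw [hfixp] at h5
                exact h5.le
          have hmapL2 : ∀ s ∈ Set.Icc (p - dL) p, f s ∈ Set.Icc p bR := by
            intro s hs
            have hsI : s ∈ Set.Icc (0:ℝ) 1 := hIccL2 hs
            constructor
            · rcases eq_or_lt_of_le hs.2 with h | h
              · rw [h, hfixp]
              · have hmem_s : s ∈ Set.Icc bL p := ⟨by linarith [hs.1], hs.2⟩
                have h5 := hantiL hmem_s ⟨hbLlt.le, le_rfl⟩ h
                rw [hfixp] at h5
                exact h5.le
            · have h1 : |s - p| < ηL := by
                rw [abs_sub_comm, abs_of_nonneg (by linarith [hs.2])]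
                linarith [hs.1]
              have h3 := hcpL s hsI h1
              have h4 := abs_lt.mp h3
              linarith [h4.2]
          have e2 : ∀ y : ℝ, f^[2] y = f (f y) := fun y => by
            rw [Function.iterate_succ_apply', Function.iterate_one]
          have hfix2 : f^[2] p = p := Function.iterate_fixed hfixp 2
          have hR2sub : Set.Icc p (p + dR) ⊆ Set.Icc p bR :=
            Set.Icc_subset_Icc le_rfl (by linarith)
          have hL2sub : Set.Icc (p - dL) p ⊆ Set.Icc bL p :=
            Set.Icc_subset_Icc (by linarith) le_rfl
          have hmono2R : StrictMonoOn (f^[2]) (Set.Icc p (p + dR)) := by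
            intro s hs t ht hst
            have h1 : f t < f s := hantiR (hR2sub hs) (hR2sub ht) hst
            have h4 : f (f s) < f (f t) := hantiL (hmapR2 t ht) (hmapR2 s hs) h1
            rw [e2 s, e2 t]
            exact h4
          have hmono2L : StrictMonoOn (f^[2]) (Set.Icc (p - dL) p) := by
            intro s hs t ht hst
            have h1 : f t < f s := hantiL (hL2sub hs) (hL2sub ht) hst
            have h4 : f (f s) < f (f t) := hantiR (hmapL2 t ht) (hmapL2 s hs) h1
            rw [e2 s, e2 t]
            exact h4
          have hcont2R : ContinuousOn (f^[2]) (Set.Icc p (p + dR)) := by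
            have h1 : ContinuousOn (fun y => f (f y)) (Set.Icc p (p + dR)) :=
              ContinuousOn.comp (hf.mono hsubL) (hf.mono hIccR2) (fun s hs => hmapR2 s hs)
            rw [show (f^[2] : ℝ → ℝ) = fun y => f (f y) from funext e2]
            exact h1
          have hcont2L : ContinuousOn (f^[2]) (Set.Icc (p - dL) p) := by
            have h1 : ContinuousOn (fun y => f (f y)) (Set.Icc (p - dL) p) :=
              ContinuousOn.comp (hf.mono hsubR) (hf.mono hIccL2) (fun s hs => hmapL2 s hs)
            rw [show (f^[2] : ℝ → ℝ) = fun y => f (f y) from funext e2]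
            exact h1
          have hM2 : Set.MapsTo (f^[2]) S S := hM.iterate 2
          have hfS2 : ContinuousOn (f^[2]) S := by
            have h1 : ContinuousOn (fun y => f (f y)) S := ContinuousOn.comp hfS hfS hM
            rw [show (f^[2] : ℝ → ℝ) = fun y => f (f y) from funext e2]
            exact h1
          obtain ⟨hv2x, hfar2x⟩ := myParity hfixp hcp (fun n => horbI x hxS n) hvx
            ⟨ε₀, hε₀, hfarx'⟩
          obtain ⟨ε₂, hε₂, hfar2x'⟩ := hfar2x
          apply myCore (f^[2]) S hScomp hfS2 hM2 p hfix2 (min dR dL) ε₂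
            (lt_min hdRpos hdLpos) hε₂ x hxS hv2x hfar2x'
          · intro s hsS h1 h2
            obtain ⟨hv2s, hfar2s⟩ := myParity hfixp hcp (fun n => horbI s hsS n)
              (pairdata s hsS h1.ne').1 (pairdata s hsS h1.ne').2
            apply myTrapRight hcont2R hmono2R hfix2 h1 ?_ hv2s hfar2s
            have h3 : min dR dL ≤ dR := min_le_left _ _
            linarith
          · left
            intro s hsS h1 h2
            obtain ⟨hv2s, hfar2s⟩ := myParity hfixp hcp (fun n => horbI s hsS n)
              (pairdata s hsS h2.ne).1 (pairdata s hsS h2.ne).2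
            apply myTrapLeft hcont2L hmono2L hfix2 ?_ h2 hv2s hfar2s
            have h3 : min dR dL ≤ dL := min_le_right _ _
            linarith
          · exact hinj2
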